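/- For the broom with path of length a and b leaves rooted at the far end r of the path (n = a + b + 1 vertices), the total number of vertices over all subtrees containing r equals (a^2 + a)/2 + (a + 1 + b/2)·2^b, and hence the local mean subtree order at r equals n − (1/2)(b + a·n/(a + 2^b)). -/

import Mathlib

open scoped Classical

/-- The subtrees (nonempty connected induced subgraphs) of a graph, as vertex sets. -/
noncomputable def subtrees {V : Type*} [Fintype V] (G : SimpleGraph V) :
    Finset (Finset V) :=
  Finset.univ.filter (fun s => s.Nonempty ∧ (G.induce (s : Set V)).Connected)

/-- The subtrees of a graph containing a fixed vertex `r`. -/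
noncomputable def subtreesThrough {V : Type*} [Fintype V] (G : SimpleGraph V) (r : V) :
    Finset (Finset V) :=
  Finset.univ.filter (fun s => r ∈ s ∧ (G.induce (s : Set V)).Connected)

/-- The broom with a handle of length `a` and `b` leaves: vertices `0,…,a` form a path
and vertices `a+1,…,a+b` are leaves attached to vertex `a`. The root is vertex `0`. -/
def broom (a b : ℕ) : SimpleGraph (Fin (a + b + 1)) :=
  SimpleGraph.fromRel (fun i j =>
    (i.val + 1 = j.val ∧ j.val ≤ a) ∨ (i.val = a ∧ a < j.val))

section Aux
open Finset
variable {a b : ℕ}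
lemma broom_adj {u v : Fin (a+b+1)} : (broom a b).Adj u v ↔ u ≠ v ∧
    ((u.val + 1 = v.val ∧ v.val ≤ a) ∨ (u.val = a ∧ a < v.val) ∨
     (v.val + 1 = u.val ∧ u.val ≤ a) ∨ (v.val = a ∧ a < u.val)) := by
  simp [broom, SimpleGraph.fromRel_adj]; tauto
lemma broom_adj_step {u v : Fin (a+b+1)} (h : (broom a b).Adj u v) :
    min v.val a ≤ min u.val a + 1 ∧ min u.val a ≤ min v.val a + 1 := by
  rw [broom_adj] at h
  rcases h with ⟨-, h⟩
  rcases h with h1|h1|h1|h1 <;> omega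

lemma walk_ivt {x y : Fin (a+b+1)} (w : (broom a b).Walk x y) :
    ∀ j, (min x.val a ≤ j ∧ j ≤ min y.val a) ∨ (min y.val a ≤ j ∧ j ≤ min x.val a) →
    ∃ z ∈ w.support, min z.val a = j := by
  induction w with
  | @nil u =>
    intro j hj
    exact ⟨u, by simp, by omega⟩
  | @cons u v w' h p ih =>
    intro j hj
    by_cases hx : min u.val a = j
    · exact ⟨u, by simp, hx⟩
    · have hs := broom_adj_step h
      obtain ⟨z, hz, hz2⟩ := ih j (by omega)
      exact ⟨z, by simp [hz], hz2⟩
variable {a b : ℕ}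

abbrev rt (a b : ℕ) : Fin (a + b + 1) := ⟨0, Nat.succ_pos _⟩

lemma closure_of_connected {s : Finset (Fin (a+b+1))} (hr : rt a b ∈ s)
    (hc : ((broom a b).induce (s : Set (Fin (a+b+1)))).Connected) :
    ∀ v ∈ s, ∀ z : Fin (a+b+1), z.val ≤ min v.val a → z ∈ s := by
  intro v hv z hz
  obtain ⟨w0⟩ := hc.preconnected ⟨rt a b, hr⟩ ⟨v, hv⟩
  let w : (broom a b).Walk (rt a b) v :=
    w0.map (SimpleGraph.Embedding.induce (s : Set (Fin (a+b+1)))).toHom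
  have hsupp : ∀ z' ∈ w.support, z' ∈ s := by
    intro z' hz'
    rw [show w.support = _ from SimpleGraph.Walk.support_map _ _, List.mem_map] at hz'
    obtain ⟨⟨z'', hz''⟩, _, rfl⟩ := hz'
    exact hz''
  by_cases hza : z.val < a
  · obtain ⟨z', hz', hz2⟩ := walk_ivt w z.val (by left; constructor <;> simp <;> omega)
    have : z' = z := Fin.ext (by omega)
    exact this ▸ hsupp z' hz'
  · have hzeq : z.val = a := by omega
    by_cases hva : v.val = a
    · have : z = v := Fin.ext (by omega)
      exact this ▸ hv
    · have hlv : a < v.val := by omega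
      have hne : v ≠ rt a b := by
        intro h
        rw [Fin.ext_iff] at h
        change v.val = 0 at h
        omega
      have hnn : ¬ w.reverse.Nil := SimpleGraph.Walk.not_nil_of_ne hne
      rw [SimpleGraph.Walk.not_nil_iff] at hnn
      obtain ⟨u, hadj, q, hq⟩ := hnn
      have hu : u ∈ s := by
        apply hsupp
        have : u ∈ w.reverse.support := by rw [hq, SimpleGraph.Walk.support_cons]; exact List.mem_cons_of_mem _ q.start_mem_support
        rwa [SimpleGraph.Walk.support_reverse, List.mem_reverse] at this
      have : u = z := by
        rw [broom_adj] at hadj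
        rcases hadj.2 with h1|h1|h1|h1 <;> exact Fin.ext (by omega)
      exact this ▸ hu

lemma connected_of_closure {s : Finset (Fin (a+b+1))} (hr : rt a b ∈ s)
    (hcl : ∀ v ∈ s, ∀ z : Fin (a+b+1), z.val ≤ min v.val a → z ∈ s) :
    ((broom a b).induce (s : Set (Fin (a+b+1)))).Connected := by
  rw [SimpleGraph.connected_iff]
  have key : ∀ k, ∀ v, ∀ hv : v ∈ s, v.val = k →
      ((broom a b).induce (s : Set (Fin (a+b+1)))).Reachable ⟨rt a b, hr⟩ ⟨v, hv⟩ := by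
    intro k
    induction k using Nat.strong_induction_on with
    | _ k ih =>
      intro v hv hk
      rcases Nat.eq_zero_or_pos v.val with h0 | h0
      · have : (⟨v, hv⟩ : (s : Set (Fin (a+b+1)))) = ⟨rt a b, hr⟩ :=
          Subtype.ext (Fin.ext (by simpa using h0))
        rw [this]
      · by_cases hva : v.val ≤ a
        · have hub : v.val - 1 < a + b + 1 := by omega
          have hu : (⟨v.val - 1, hub⟩ : Fin (a+b+1)) ∈ s := hcl v hv _ (by simp; omega)
          have hadj' : (broom a b).Adj ⟨v.val - 1, hub⟩ v := by
            rw [broom_adj]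
            exact ⟨Fin.ne_of_val_ne (by simp; omega), Or.inl ⟨by simp; omega, hva⟩⟩
          have hadj : ((broom a b).induce (s : Set (Fin (a+b+1)))).Adj
              ⟨⟨v.val - 1, hub⟩, hu⟩ ⟨v, hv⟩ := hadj'
          exact (ih (v.val - 1) (by omega) _ hu rfl).trans hadj.reachable
        · have hub : a < a + b + 1 := by omega
          have hu : (⟨a, hub⟩ : Fin (a+b+1)) ∈ s := hcl v hv _ (by simp; omega)
          have hadj' : (broom a b).Adj ⟨a, hub⟩ v := by
            rw [broom_adj]
            exact ⟨Fin.ne_of_val_ne (by simp; omega), Or.inr (Or.inl ⟨by simp, by omega⟩)⟩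
          have hadj : ((broom a b).induce (s : Set (Fin (a+b+1)))).Adj
              ⟨⟨a, hub⟩, hu⟩ ⟨v, hv⟩ := hadj'
          exact (ih a (by omega) _ hu rfl).trans hadj.reachable
  refine ⟨fun x y => ?_, ⟨⟨rt a b, hr⟩⟩⟩
  have hx := key x.1.val x.1 x.2 rfl
  have hy := key y.1.val y.1 y.2 rfl
  exact (hx.symm.trans hy)

def seg (a b i : ℕ) : Finset (Fin (a+b+1)) := univ.filter (fun v => v.val ≤ i)
def lvs (a b : ℕ) : Finset (Fin (a+b+1)) := univ.filter (fun v => a < v.val)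

lemma mem_seg {i : ℕ} {v : Fin (a+b+1)} : v ∈ seg a b i ↔ v.val ≤ i := by simp [seg]
lemma mem_lvs {v : Fin (a+b+1)} : v ∈ lvs a b ↔ a < v.val := by simp [lvs]

lemma subtreesThrough_eq :
    subtreesThrough (broom a b) (rt a b) =
      (range a).image (fun i => seg a b i) ∪
      (lvs a b).powerset.image (fun T => seg a b a ∪ T) := by
  have hab : a < a + b + 1 := by omega
  ext s
  simp only [subtreesThrough, mem_filter, mem_univ, true_and, mem_union, mem_image,
    mem_range, mem_powerset]
  constructor
  · rintro ⟨hr, hc⟩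
    have hcl := closure_of_connected hr hc
    by_cases ha : (⟨a, hab⟩ : Fin (a+b+1)) ∈ s
    · right
      refine ⟨s.filter (fun v => a < v.val), fun v hv => mem_lvs.2 (mem_filter.1 hv).2, ?_⟩
      ext v
      simp only [mem_union, mem_seg, mem_filter]
      constructor
      · rintro (h | ⟨hv, -⟩)
        · exact hcl _ ha v (by simp; omega)
        · exact hv
      · intro hv
        by_cases hva : v.val ≤ a
        · exact Or.inl hva
        · exact Or.inr ⟨hv, by omega⟩
    · left
      have hnl : ∀ v ∈ s, v.val ≤ a := by
        intro v hv
        by_contra h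
        exact ha (hcl v hv ⟨a, hab⟩ (by simp; omega))
      obtain ⟨w, hw, hwi⟩ := Finset.exists_mem_eq_sup s ⟨rt a b, hr⟩ (fun v => v.val)
      have hle : ∀ v ∈ s, v.val ≤ w.val := fun v hv => hwi ▸ Finset.le_sup hv
      have hwa : w.val ≤ a := hnl w hw
      have hina : w.val ≠ a := by
        intro h
        exact ha (by rwa [show (⟨a, hab⟩ : Fin (a+b+1)) = w from Fin.ext (by simp; omega)])
      refine ⟨w.val, by omega, ?_⟩
      ext v
      simp only [mem_seg]
      constructor
      · exact fun hv => hcl w hw v (by rw [min_eq_left hwa]; exact hv)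
      · exact fun hv => hle v hv
  · rintro (⟨i, hi, rfl⟩ | ⟨T, hT, rfl⟩)
    · have hr : rt a b ∈ seg a b i := mem_seg.2 (by simp)
      refine ⟨hr, connected_of_closure hr ?_⟩
      intro v hv z hz
      rw [mem_seg] at *
      omega
    · have hr : rt a b ∈ seg a b a ∪ T := mem_union_left _ (mem_seg.2 (by simp))
      refine ⟨hr, connected_of_closure hr ?_⟩
      intro v hv z hz
      exact mem_union_left _ (mem_seg.2 (by omega))


lemma card_seg {i : ℕ} (h : i ≤ a) : (seg a b i).card = i + 1 := by
  have : seg a b i = Finset.Iic (⟨i, by omega⟩ : Fin (a+b+1)) := by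
    ext v; simp [mem_seg, Fin.le_def]
  rw [this, Fin.card_Iic]

lemma card_lvs : (lvs a b).card = b := by
  have h1 : lvs a b = (seg a b a)ᶜ := by
    ext v; simp [mem_seg, mem_lvs]
  rw [h1, Finset.card_compl, card_seg (le_refl a), Fintype.card_fin]
  omega

lemma seg_disj {T : Finset (Fin (a+b+1))} (hT : T ⊆ lvs a b) : Disjoint (seg a b a) T := by
  rw [Finset.disjoint_left]
  intro v hv hvT
  have := mem_lvs.1 (hT hvT)
  rw [mem_seg] at hv
  omega

lemma card_segT {T : Finset (Fin (a+b+1))} (hT : T ⊆ lvs a b) :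
    (seg a b a ∪ T).card = a + 1 + T.card := by
  rw [Finset.card_union_of_disjoint (seg_disj hT), card_seg (le_refl a)]

lemma seg_injOn : ∀ i ∈ range a, ∀ j ∈ range a, seg a b i = seg a b j → i = j := by
  intro i hi j hj h
  rw [mem_range] at hi hj
  have h1 : (⟨i, by omega⟩ : Fin (a+b+1)) ∈ seg a b i := mem_seg.2 (by simp)
  have h2 : (⟨j, by omega⟩ : Fin (a+b+1)) ∈ seg a b j := mem_seg.2 (by simp)
  rw [h] at h1
  rw [← h] at h2
  rw [mem_seg] at h1 h2
  simp at h1 h2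
  omega

lemma segT_injOn : ∀ T ∈ (lvs a b).powerset, ∀ T' ∈ (lvs a b).powerset,
    seg a b a ∪ T = seg a b a ∪ T' → T = T' := by
  intro T hT T' hT' h
  rw [mem_powerset] at hT hT'
  have key : ∀ (U : Finset (Fin (a+b+1))), U ⊆ lvs a b →
      (seg a b a ∪ U).filter (fun v => a < v.val) = U := by
    intro U hU
    ext v
    simp only [mem_filter, mem_union, mem_seg]
    constructor
    · rintro ⟨h1 | h1, h2⟩
      · omega
      · exact h1
    · intro hv
      exact ⟨Or.inr hv, mem_lvs.1 (hU hv)⟩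
  rw [← key T hT, ← key T' hT', h]

lemma AB_disj : Disjoint ((range a).image (fun i => seg a b i))
    ((lvs a b).powerset.image (fun T => seg a b a ∪ T)) := by
  rw [Finset.disjoint_left]
  rintro s hs ht
  obtain ⟨i, hi, rfl⟩ := mem_image.1 hs
  obtain ⟨T, hT, hEq⟩ := mem_image.1 ht
  rw [mem_range] at hi
  have h1 : (⟨a, by omega⟩ : Fin (a+b+1)) ∈ seg a b a ∪ T := mem_union_left _ (mem_seg.2 (by simp))
  rw [hEq] at h1
  rw [mem_seg] at h1
  simp at h1
  omega

lemma gauss_sum : ∑ i ∈ range a, ((i : ℝ) + 1) = ((a:ℝ)^2 + a) / 2 := by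
  induction a with
  | zero => simp
  | succ m ih => rw [Finset.sum_range_succ, ih]; push_cast; ring

lemma powerset_card_sum (L : Finset (Fin (a+b+1))) :
    ∑ T ∈ L.powerset, (T.card : ℝ) = (L.card : ℝ) * 2 ^ L.card / 2 := by
  have key : ∑ T ∈ L.powerset, (T.card : ℝ) = ∑ T ∈ L.powerset, ((L \ T).card : ℝ) := by
    refine Finset.sum_nbij' (fun T => L \ T) (fun T => L \ T) ?_ ?_ ?_ ?_ ?_
    · intro T hT; exact mem_powerset.2 (sdiff_subset)
    · intro T hT; exact mem_powerset.2 (sdiff_subset)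
    · intro T hT; exact Finset.sdiff_sdiff_eq_self (mem_powerset.1 hT)
    · intro T hT; exact Finset.sdiff_sdiff_eq_self (mem_powerset.1 hT)
    · intro T hT; rw [Finset.sdiff_sdiff_eq_self (mem_powerset.1 hT)]
  have key2 : ∑ T ∈ L.powerset, (((L \ T).card : ℝ) + (T.card : ℝ)) =
      ∑ T ∈ L.powerset, (L.card : ℝ) := by
    apply Finset.sum_congr rfl
    intro T hT
    rw [← Nat.cast_add, Finset.card_sdiff_add_card_eq_card (mem_powerset.1 hT)]
  rw [Finset.sum_add_distrib, ← key, Finset.sum_const, Finset.card_powerset] at key2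
  rw [nsmul_eq_mul] at key2
  push_cast at key2 ⊢
  linarith


end Aux

open Finset

/-- For the broom with path of length `a` and `b` leaves rooted at the far end `r`,
the total order of all subtrees containing `r` equals `(a²+a)/2 + (a+1+b/2)·2^b`, and
the local mean subtree order at `r` equals `n − (1/2)(b + a·n/(a + 2^b))`. -/
theorem stmt4 (a b n : ℕ) (hn : n = a + b + 1) :
    (∑ s ∈ subtreesThrough (broom a b) ⟨0, Nat.succ_pos _⟩, (s.card : ℝ)) =
        ((a : ℝ) ^ 2 + a) / 2 + ((a : ℝ) + 1 + (b : ℝ) / 2) * 2 ^ b ∧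
    (∑ s ∈ subtreesThrough (broom a b) ⟨0, Nat.succ_pos _⟩, (s.card : ℝ)) /
        (subtreesThrough (broom a b) ⟨0, Nat.succ_pos _⟩).card =
      (n : ℝ) - (1 / 2) * ((b : ℝ) + (a : ℝ) * n / ((a : ℝ) + 2 ^ b)) := by
  have hsum : (∑ s ∈ subtreesThrough (broom a b) (rt a b), (s.card : ℝ)) =
      ((a : ℝ) ^ 2 + a) / 2 + ((a : ℝ) + 1 + (b : ℝ) / 2) * 2 ^ b := by
    rw [subtreesThrough_eq, Finset.sum_union AB_disj,
      Finset.sum_image seg_injOn, Finset.sum_image segT_injOn]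
    have h1 : ∑ i ∈ range a, (((seg a b i).card : ℕ) : ℝ) = ((a:ℝ)^2 + a) / 2 := by
      rw [← gauss_sum]
      apply Finset.sum_congr rfl
      intro i hi
      rw [card_seg (by rw [mem_range] at hi; omega)]
      push_cast; ring
    have h2 : ∑ T ∈ (lvs a b).powerset, (((seg a b a ∪ T).card : ℕ) : ℝ) =
        ((a : ℝ) + 1 + (b : ℝ) / 2) * 2 ^ b := by
      have : ∀ T ∈ (lvs a b).powerset, (((seg a b a ∪ T).card : ℕ) : ℝ) =
          ((a : ℝ) + 1) + (T.card : ℝ) := by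
        intro T hT
        rw [card_segT (mem_powerset.1 hT)]
        push_cast; ring
      rw [Finset.sum_congr rfl this, Finset.sum_add_distrib, Finset.sum_const,
        Finset.card_powerset, card_lvs, powerset_card_sum, card_lvs]
      push_cast; ring
    rw [h1, h2]
  have hcard : ((subtreesThrough (broom a b) (rt a b)).card : ℝ) = (a : ℝ) + 2 ^ b := by
    rw [subtreesThrough_eq, Finset.card_union_of_disjoint AB_disj,
      Finset.card_image_of_injOn seg_injOn, Finset.card_image_of_injOn segT_injOn,
      Finset.card_range, Finset.card_powerset, card_lvs]
    push_cast; ring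
  refine ⟨hsum, ?_⟩
  rw [show (⟨0, Nat.succ_pos _⟩ : Fin (a+b+1)) = rt a b from rfl, hsum, hcard, hn]
  have h2b : (0:ℝ) < 2 ^ b := by positivity
  have hpos : (0:ℝ) < (a : ℝ) + 2 ^ b := by positivity
  field_simp
  push_cast
  ring
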